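/- Let H be a subgroup of a finite group G, V an F H-module with char F not dividing |G|, W = Ind_H^G V = ⊕_{g∈C} g·V for a set C of left coset representatives with 1 ∈ C, and π : S(W) → S(V) the algebra surjection extending the projection W → V with kernel ⊕_{g≠1} g·V. Then π(S(W)^G) = S(V)^H. -/
import Mathlib


noncomputable section
open MvPolynomial

variable {F : Type} [Field F]

/-- The algebra homomorphism between polynomial algebras (viewed as symmetric algebras)
induced by a linear map between the spaces of variables (the degree one components). -/
noncomputable def algOf {α β : Type} [Fintype α] [Fintype β] [DecidableEq α]
    (f : (α → F) →ₗ[F] (β → F)) :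
    MvPolynomial α F →ₐ[F] MvPolynomial β F :=
  aeval fun j => ∑ i, f (Pi.single j 1) i • X i

/-- The embedding of the space of linear forms into the polynomial algebra. -/
noncomputable def lin {β : Type} [Fintype β] (w : β → F) : MvPolynomial β F :=
  ∑ i, w i • X i

/-- The subalgebra of `G`-invariants of the symmetric algebra of a representation. -/
def invariants {G : Type} [Group G] {α : Type} [Fintype α] [DecidableEq α]
    (ρ : Representation F G (α → F)) : Subalgebra F (MvPolynomial α F) where
  carrier := {p | ∀ g : G, algOf (ρ g) p = p}
  mul_mem' := fun ha hb g => by rw [map_mul, ha g, hb g]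
  add_mem' := fun ha hb g => by rw [map_add, ha g, hb g]
  algebraMap_mem' := fun r g => (algOf (ρ g)).commutes r

variable {G : Type} [Group G] {α : Type} [Fintype α] [DecidableEq α]

/-- The invariant ring is generated as an `F`-algebra in degrees at most `d`. -/
def genLE (ρ : Representation F G (α → F)) (d : ℕ) : Prop :=
  Algebra.adjoin F {p : MvPolynomial α F | p ∈ invariants ρ ∧ p.totalDegree ≤ d}
    = invariants ρ

/-- The Noether number `β(G,W)` of a representation. -/
def noether (ρ : Representation F G (α → F)) : ℕ := sInf {d | genLE ρ d}

/-- The Hilbert ideal: the ideal of `S(W)` generated by the invariants of positive degree. -/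
def hilbertIdeal (ρ : Representation F G (α → F)) : Ideal (MvPolynomial α F) :=
  Ideal.span {p | p ∈ invariants ρ ∧ constantCoeff p = 0}

/-- `b(G,W)`: the top degree of the algebra of coinvariants `S(W)/S(W)₊^G S(W)`. -/
def coinvTop (ρ : Representation F G (α → F)) : ℕ :=
  sSup {d | ∃ p : MvPolynomial α F, p.IsHomogeneous d ∧ p ∉ hilbertIdeal ρ}

/-- `b_k(G,W)`: the top degree of `S(W)/((S(W)₊^G)^k S(W))`. -/
def coinvTopK (ρ : Representation F G (α → F)) (k : ℕ) : ℕ :=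
  sSup {d | ∃ p : MvPolynomial α F, p.IsHomogeneous d ∧ p ∉ (hilbertIdeal ρ) ^ k}

/-- The span of all products of `k` positive-degree invariants,
i.e. `(S(W)₊^G)^k` computed inside the invariant ring. -/
def prodPow (ρ : Representation F G (α → F)) (k : ℕ) : Submodule F (MvPolynomial α F) :=
  Submodule.span F {x | ∃ f : Fin k → MvPolynomial α F,
    (∀ i, f i ∈ invariants ρ ∧ constantCoeff (f i) = 0) ∧ x = ∏ i, f i}

/-- The `k`-th Noether number `β_k(G,W)`, the top degree of `S(W)^G/(S(W)₊^G)^{k+1}`. -/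
def noetherK (ρ : Representation F G (α → F)) (k : ℕ) : ℕ :=
  sSup {d | ∃ p, p ∈ invariants ρ ∧ p.IsHomogeneous d ∧ p ∉ prodPow ρ (k+1)}

/-- `β(G)`: the supremum of the Noether numbers over all finite dimensional modules. -/
def noetherSup (F G : Type) [Field F] [Group G] : ℕ∞ :=
  ⨆ (n : ℕ) (ρ : Representation F G (Fin n → F)), (noether ρ : ℕ∞)

/-- `b(G)`: the supremum of `b(G,W)` over all finite dimensional modules. -/
def coinvSup (F G : Type) [Field F] [Group G] : ℕ∞ :=
  ⨆ (n : ℕ) (ρ : Representation F G (Fin n → F)), (coinvTop ρ : ℕ∞)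

/-- `β_k(G)`: the supremum of the `k`-th Noether numbers over all modules. -/
def noetherKSup (F G : Type) [Field F] [Group G] (k : ℕ) : ℕ∞ :=
  ⨆ (n : ℕ) (ρ : Representation F G (Fin n → F)), (noetherK ρ k : ℕ∞)



noncomputable def linMap {β : Type} [Fintype β] : (β → F) →ₗ[F] MvPolynomial β F where
  toFun := lin
  map_add' a b := by simp [lin, add_smul, Finset.sum_add_distrib]
  map_smul' r a := by simp [lin, smul_smul, Finset.smul_sum]

lemma lin_single {β : Type} [Fintype β] [DecidableEq β] (j : β) :
    lin (Pi.single j (1 : F)) = X j := by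
  simp [lin, Pi.single_apply, ite_smul]

lemma algOf_X {α β : Type} [Fintype α] [Fintype β] [DecidableEq α]
    (f : (α → F) →ₗ[F] (β → F)) (j : α) :
    algOf f (X j) = lin (f (Pi.single j 1)) := by
  simp [algOf, lin]

lemma algOf_lin {α β : Type} [Fintype α] [Fintype β] [DecidableEq α]
    (f : (α → F) →ₗ[F] (β → F)) (w : α → F) :
    algOf f (lin w) = lin (f w) := by
  classical
  have hw : ∑ i : α, w i • (Pi.single i (1 : F) : α → F) = w := by
    ext k
    simp [Finset.sum_apply, Pi.single_apply]
  show algOf f (linMap w) = linMap (f w)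
  rw [← hw]
  simp only [map_sum, map_smul]
  refine Finset.sum_congr rfl fun i _ => ?_
  congr 1
  show algOf f (lin (Pi.single i 1)) = lin (f (Pi.single i 1))
  rw [lin_single, algOf_X]

lemma algOf_comp {α β γ : Type} [Fintype α] [Fintype β] [Fintype γ]
    [DecidableEq α] [DecidableEq β]
    (f : (β → F) →ₗ[F] (γ → F)) (g : (α → F) →ₗ[F] (β → F)) :
    algOf (f ∘ₗ g) = (algOf f).comp (algOf g) := by
  apply MvPolynomial.algHom_ext
  intro j
  rw [AlgHom.comp_apply, algOf_X, algOf_X, algOf_lin]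
  rfl

lemma algOf_id {α : Type} [Fintype α] [DecidableEq α] :
    algOf (LinearMap.id : (α → F) →ₗ[F] (α → F)) = AlgHom.id F (MvPolynomial α F) := by
  apply MvPolynomial.algHom_ext
  intro j
  rw [algOf_X]
  simp [lin_single]

lemma constantCoeff_lin {β : Type} [Fintype β] (w : β → F) :
    constantCoeff (lin w) = 0 := by
  simp [lin]

lemma algHom_apply_eq_of_X_zero {α : Type} [Fintype α] {B : Type} [CommRing B] [Algebra F B]
    (ψ : MvPolynomial α F →ₐ[F] B) (h : ∀ j, ψ (X j) = 0) (p : MvPolynomial α F) :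
    ψ p = algebraMap F B (constantCoeff p) := by
  conv_lhs => rw [aeval_unique ψ]
  rw [show (⇑ψ ∘ X : α → B) = fun _ => 0 from funext h]
  exact aeval_zero' p

lemma mem_invariants {G : Type} [Group G] {α : Type} [Fintype α] [DecidableEq α]
    (ρ : Representation F G (α → F)) (p : MvPolynomial α F) :
    p ∈ invariants ρ ↔ ∀ g : G, algOf (ρ g) p = p := Iff.rfl


/-- `π(S(W)^G) = S(V)^H`, where `π : S(W) → S(V)` is the algebra
surjection extending the projection `W → V` killing the summands `g·V`, `g ∈ C`, `g ≠ 1`. -/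
theorem stmt6
    {G : Type} [Group G] [Fintype G]
    (hchar : (Fintype.card G : F) ≠ 0)
    (H : Subgroup G) {nV m : ℕ}
    (ρ : Representation F H (Fin nV → F))
    (σ : Representation F G (Fin m → F))
    (ι : (Fin nV → F) →ₗ[F] (Fin m → F)) (hι : Function.Injective ι)
    (hequiv : ∀ h : H, σ h ∘ₗ ι = ι ∘ₗ ρ h)
    (C : Set G) (hC : Subgroup.IsComplement C (H : Set G)) (h1 : (1:G) ∈ C)
    (hindep : iSupIndep fun c : C => (LinearMap.range ι).map (σ c.1))
    (hspan : ⨆ c : C, (LinearMap.range ι).map (σ c.1) = ⊤)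
    (π : MvPolynomial (Fin m) F →ₐ[F] MvPolynomial (Fin nV) F)
    (hπ1 : π.comp (algOf ι) = AlgHom.id F (MvPolynomial (Fin nV) F))
    (hπ2 : ∀ c ∈ C, c ≠ 1 → ∀ v : Fin nV → F, π (lin (σ c (ι v))) = 0) :
    (invariants σ).map π = invariants ρ := by
  classical
  -- π on linear forms coming from a summand
  have hπlin : ∀ c ∈ C, ∀ v : Fin nV → F,
      π (lin (σ c (ι v))) = if c = 1 then lin v else 0 := by
    intro c hc v
    by_cases hc1 : c = 1
    · subst hc1
      rw [if_pos rfl, map_one σ]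
      have h2 : (1 : Module.End F (Fin m → F)) (ι v) = ι v := rfl
      rw [h2]
      have h3 := DFunLike.congr_fun hπ1 (lin v)
      rwa [AlgHom.comp_apply, algOf_lin] at h3
    · rw [if_neg hc1]
      exact hπ2 c hc hc1 v
  -- an element of C ∩ H is 1
  have hCH : ∀ x ∈ C, x ∈ (H : Set G) → x = 1 := by
    intro x hxC hxH
    have h2 := hC.1 (a₁ := ⟨⟨x, hxC⟩, ⟨1, H.one_mem⟩⟩)
      (a₂ := ⟨⟨1, h1⟩, ⟨x, hxH⟩⟩) (by simp)
    simpa using congrArg (fun p => (p.1 : G)) h2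
  -- key computation
  have hkey : ∀ c ∈ C, ∀ q : MvPolynomial (Fin nV) F, constantCoeff q = 0 →
      π (algOf (σ c) (algOf ι q)) = if c = 1 then q else 0 := by
    intro c hc q hq
    by_cases hc1 : c = 1
    · subst hc1
      rw [if_pos rfl, map_one σ, Module.End.one_eq_id, algOf_id, AlgHom.id_apply]
      exact DFunLike.congr_fun hπ1 q
    · rw [if_neg hc1]
      have hx : ∀ j, (π.comp ((algOf (σ c)).comp (algOf ι))) (X j) = 0 := by
        intro j
        rw [AlgHom.comp_apply, AlgHom.comp_apply, algOf_X, algOf_lin]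
        exact hπ2 c hc hc1 _
      have h2 := algHom_apply_eq_of_X_zero (π.comp ((algOf (σ c)).comp (algOf ι))) hx q
      rw [hq, map_zero] at h2
      simpa using h2
  -- H-equivariance of π on linear forms
  have hlinw : ∀ (h : H) (w : Fin m → F),
      π (algOf (σ (h : G)) (lin w)) = algOf (ρ h) (π (lin w)) := by
    intro h w
    set Φ : (Fin m → F) →ₗ[F] MvPolynomial (Fin nV) F :=
      (π.toLinearMap ∘ₗ (algOf (σ (h : G))).toLinearMap
        - (algOf (ρ h)).toLinearMap ∘ₗ π.toLinearMap) ∘ₗ linMap with hΦdef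
    have hker : (⊤ : Submodule F (Fin m → F)) ≤ LinearMap.ker Φ := by
      rw [← hspan]
      refine iSup_le fun c => fun y hy => ?_
      obtain ⟨x, hx, rfl⟩ := Submodule.mem_map.mp hy
      obtain ⟨v, rfl⟩ := hx
      rw [LinearMap.mem_ker]
      obtain ⟨⟨c', h'⟩, hdec, huniq⟩ := hC.existsUnique ((h : G) * (c : G))
      have e0 : σ (h : G) (σ (c : G) (ι v)) = σ ((c' : G) * (h' : G)) (ι v) := by
        rw [hdec, map_mul]
        rfl
      have e1 : σ ((c' : G) * (h' : G)) (ι v) = σ (c' : G) (ι (ρ ⟨(h' : G), h'.2⟩ v)) := by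
        rw [map_mul, Module.End.mul_apply]
        congr 1
        exact DFunLike.congr_fun (hequiv ⟨(h' : G), h'.2⟩) v
      show π (algOf (σ (h : G)) (lin (σ (c : G) (ι v))))
          - algOf (ρ h) (π (lin (σ (c : G) (ι v)))) = 0
      rw [algOf_lin, e0, e1, hπlin (c' : G) c'.2 _, hπlin (c : G) c.2 v]
      by_cases hcone : (c : G) = 1
      · have hpair := huniq ⟨⟨1, h1⟩, ⟨(h : G), h.2⟩⟩ (by simp [hcone])
        have hc'1 : (c' : G) = 1 := by
          simpa using (congrArg (fun p => (p.1 : G)) hpair).symm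
        have hh' : (h' : G) = (h : G) := by
          simpa using (congrArg (fun p => (p.2 : G)) hpair).symm
        rw [if_pos hcone, if_pos hc'1, algOf_lin]
        have : (⟨(h' : G), h'.2⟩ : H) = h := Subtype.ext hh'
        rw [this, sub_self]
      · have hc'1 : (c' : G) ≠ 1 := by
          intro hc'
          apply hcone
          apply hCH (c : G) c.2
          have hch : (h : G) * (c : G) = (h' : G) := by
            rw [← hdec, hc', one_mul]
          have : (c : G) = (h : G)⁻¹ * (h' : G) := by
            rw [← hch, inv_mul_cancel_left]
          rw [this]
          exact H.mul_mem (H.inv_mem h.2) h'.2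
        rw [if_neg hcone, if_neg hc'1, map_zero, sub_zero]
    have h2 : Φ w = 0 := LinearMap.mem_ker.mp (hker Submodule.mem_top)
    have h3 : π (algOf (σ (h : G)) (lin w)) - algOf (ρ h) (π (lin w)) = 0 := h2
    exact sub_eq_zero.mp h3
  -- H-equivariance of π
  have hequivπ : ∀ (h : H) (p : MvPolynomial (Fin m) F),
      π (algOf (σ (h : G)) p) = algOf (ρ h) (π p) := by
    intro h
    have hcomp : π.comp (algOf (σ (h : G))) = (algOf (ρ h)).comp π := by
      apply MvPolynomial.algHom_ext
      intro j
      have h2 := hlinw h (Pi.single j 1)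
      rw [lin_single] at h2
      simpa using h2
    exact fun p => DFunLike.congr_fun hcomp p
  apply le_antisymm
  · -- forward inclusion
    intro p hp
    obtain ⟨q, hq, rfl⟩ := Subalgebra.mem_map.mp hp
    rw [mem_invariants]
    intro g
    rw [← hequivπ g q, (mem_invariants σ q).mp hq (g : G)]
  · -- reverse inclusion
    intro f hf
    rw [mem_invariants] at hf
    set f₀ : MvPolynomial (Fin nV) F := f - MvPolynomial.C (constantCoeff f) with hf₀def
    have hcc : constantCoeff f₀ = 0 := by
      rw [hf₀def, map_sub, constantCoeff_C, sub_self]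
    have hf₀inv : ∀ hh : H, algOf (ρ hh) f₀ = f₀ := by
      intro hh
      rw [hf₀def, map_sub, hf hh]
      congr 1
      rw [show (MvPolynomial.C (constantCoeff f) : MvPolynomial (Fin nV) F)
          = algebraMap F _ (constantCoeff f) from rfl, AlgHom.commutes]
    have hHcard : ((Fintype.card H : F)) ≠ 0 := by
      have hdvd : Nat.card H ∣ Nat.card G := Subgroup.card_subgroup_dvd_card H
      rw [Nat.card_eq_fintype_card, Nat.card_eq_fintype_card] at hdvd
      obtain ⟨k, hk⟩ := hdvd
      intro h0
      apply hchar
      rw [hk, Nat.cast_mul, h0, zero_mul]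
    set P : MvPolynomial (Fin m) F :=
      (Fintype.card H : F)⁻¹ • ∑ g : G, algOf (σ g) (algOf ι f₀) with hP
    have hstep : ∀ g' g : G,
        algOf (σ g') (algOf (σ g) (algOf ι f₀)) = algOf (σ (g' * g)) (algOf ι f₀) := by
      intro g' g
      rw [map_mul σ, show σ g' * σ g = σ g' ∘ₗ σ g from rfl, algOf_comp]
      rfl
    have hPinv : P ∈ invariants σ := by
      rw [mem_invariants]
      intro g'
      rw [hP, map_smul, map_sum]
      congr 1
      rw [Finset.sum_congr rfl fun g _ => hstep g' g]
      exact Fintype.sum_bijective (fun g => g' * g) (Group.mulLeft_bijective g') _ _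
        (fun g => rfl)
    have hterm : ∀ g : G, π (algOf (σ g) (algOf ι f₀)) = if g ∈ H then f₀ else 0 := by
      intro g
      obtain ⟨⟨c, hh⟩, hdec, huniq⟩ := hC.existsUnique g
      have e1 : algOf (σ g) (algOf ι f₀) = algOf (σ (c : G)) (algOf ι f₀) := by
        rw [← hdec, ← hstep (c : G) (hh : G)]
        congr 1
        have h2 : σ (hh : G) ∘ₗ ι = ι ∘ₗ ρ ⟨(hh : G), hh.2⟩ := hequiv ⟨(hh : G), hh.2⟩
        rw [← AlgHom.comp_apply, ← algOf_comp, h2, algOf_comp, AlgHom.comp_apply,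
          hf₀inv ⟨(hh : G), hh.2⟩]
      rw [e1, hkey (c : G) c.2 f₀ hcc]
      by_cases hgH : g ∈ H
      · have hpair := huniq ⟨⟨1, h1⟩, ⟨g, hgH⟩⟩ (by simp)
        have hc1 : (c : G) = 1 := by
          simpa using (congrArg (fun p => (p.1 : G)) hpair).symm
        rw [if_pos hc1, if_pos hgH]
      · have hc1 : (c : G) ≠ 1 := by
          intro hc1
          apply hgH
          rw [← hdec, hc1, one_mul]
          exact hh.2
        rw [if_neg hc1, if_neg hgH]
    have hπP : π P = f₀ := by
      rw [hP, map_smul, map_sum]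
      rw [Finset.sum_congr rfl fun g _ => hterm g]
      rw [← Finset.sum_filter, Finset.sum_const]
      rw [show (Finset.univ.filter (fun g : G => g ∈ H)).card = Fintype.card H from
        (Fintype.card_subtype _).symm]
      rw [← Nat.cast_smul_eq_nsmul F, smul_smul, inv_mul_cancel₀ hHcard, one_smul]
    refine Subalgebra.mem_map.mpr ⟨P + algebraMap F _ (constantCoeff f), ?_, ?_⟩
    · exact (invariants σ).add_mem hPinv (Subalgebra.algebraMap_mem _ _)
    · rw [map_add, hπP, AlgHom.commutes, hf₀def,
        show (algebraMap F (MvPolynomial (Fin nV) F)) (constantCoeff f)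
          = MvPolynomial.C (constantCoeff f) from rfl]
      ring


end
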